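/- For the 4×4 matrix B = (1/√3)·[[1,1,1,0],[1,-1,-1,0],[1,-1,1,0],[1,1,-1,0]], every x ∈ {-1,1}⁴ satisfies ‖Bx‖_∞ = √3, hence β(B) = √3; moreover B maps ℝ⁴ into a 3-dimensional subspace (its fourth column is zero). -/
import Mathlib


open Matrix Finset

/-- The ±1 vector associated to a Boolean sign pattern. -/
noncomputable def signVec {n : ℕ} (σ : Fin n → Bool) : Fin n → ℝ :=
  fun i => if σ i then 1 else -1

/-- The ℓ^∞ norm (maximum absolute coordinate) of a vector. -/
noncomputable def supNorm {n : ℕ} (v : Fin n → ℝ) : ℝ := ⨆ i, |v i|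

/-- β(A) = 2^{-n} Σ_{x ∈ {-1,1}^n} ‖Ax‖_∞. -/
noncomputable def beta {n : ℕ} (A : Matrix (Fin n) (Fin n) ℝ) : ℝ :=
  (2 ^ n : ℝ)⁻¹ * ∑ σ : Fin n → Bool, supNorm (A.mulVec (signVec σ))

noncomputable def B4 : Matrix (Fin 4) (Fin 4) ℝ :=
  (Real.sqrt 3)⁻¹ • !![1, 1, 1, 0; 1, -1, -1, 0; 1, -1, 1, 0; 1, 1, -1, 0]

lemma sup4 (v : Fin 4 → ℝ) : (⨆ i, |v i|) = max (max |v 0| |v 1|) (max |v 2| |v 3|) := by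
  apply le_antisymm
  · apply ciSup_le
    intro i
    fin_cases i <;> simp [le_max_iff]
  · have hb : BddAbove (Set.range fun i => |v i|) := (Set.finite_range _).bddAbove
    simp only [max_le_iff]
    exact ⟨⟨le_ciSup hb 0, le_ciSup hb 1⟩, ⟨le_ciSup hb 2, le_ciSup hb 3⟩⟩

lemma key (s a b c : ℝ) (hs : 0 < s) (hss : s * s = 3)
    (ha : a = 1 ∨ a = -1) (hb : b = 1 ∨ b = -1) (hc : c = 1 ∨ c = -1) :
    max (max |s⁻¹ * (a + b + c)| |s⁻¹ * (a - b - c)|)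
      (max |s⁻¹ * (a - b + c)| |s⁻¹ * (a + b - c)|) = s := by
  have h3 : s⁻¹ * 3 = s := by field_simp; nlinarith
  have h1 : s⁻¹ ≤ s := by
    rw [inv_le_iff_one_le_mul₀ hs]; nlinarith
  have hinv : (0:ℝ) ≤ s⁻¹ := by positivity
  simp only [abs_mul, abs_inv, abs_of_pos hs]
  rw [← mul_max_of_nonneg _ _ hinv, ← mul_max_of_nonneg _ _ hinv, ← mul_max_of_nonneg _ _ hinv]
  rcases ha with rfl | rfl <;> rcases hb with rfl | rfl <;> rcases hc with rfl | rfl <;>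
    norm_num [h3]

lemma entry (σ : Fin 4 → Bool) :
    B4.mulVec (signVec σ) =
      ![(Real.sqrt 3)⁻¹ * (signVec σ 0 + signVec σ 1 + signVec σ 2),
        (Real.sqrt 3)⁻¹ * (signVec σ 0 - signVec σ 1 - signVec σ 2),
        (Real.sqrt 3)⁻¹ * (signVec σ 0 - signVec σ 1 + signVec σ 2),
        (Real.sqrt 3)⁻¹ * (signVec σ 0 + signVec σ 1 - signVec σ 2)] := by
  funext i
  fin_cases i <;>
    simp [B4, Matrix.mulVec, dotProduct, Fin.sum_univ_four] <;> ring

lemma perσ (σ : Fin 4 → Bool) : supNorm (B4.mulVec (signVec σ)) = Real.sqrt 3 := by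
  have hs : (0:ℝ) < Real.sqrt 3 := Real.sqrt_pos.mpr (by norm_num)
  have hss : Real.sqrt 3 * Real.sqrt 3 = 3 := Real.mul_self_sqrt (by norm_num)
  rw [supNorm, entry σ, sup4]
  simp only [Matrix.cons_val_zero, Matrix.cons_val_one, Matrix.head_cons,
    Matrix.cons_val_two, Matrix.tail_cons, Matrix.cons_val_three]
  apply key _ _ _ _ hs hss <;> simp [signVec] <;> rcases σ 0 <;> rcases σ 1 <;> rcases σ 2 <;> simp

theorem bad_science_n4_degenerate :
    (∀ σ : Fin 4 → Bool, supNorm (B4.mulVec (signVec σ)) = Real.sqrt 3) ∧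
    beta B4 = Real.sqrt 3 ∧
    (∀ i, B4 i 3 = 0) := by
  refine ⟨perσ, ?_, ?_⟩
  · rw [beta]
    rw [Finset.sum_congr rfl (fun σ _ => perσ σ)]
    simp [Finset.card_univ]
    ring
  · intro i
    fin_cases i <;> simp [B4, Matrix.vecHead, Matrix.vecTail]
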